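/- Fix ε ∈ [0,1). For any general source X and any ε₁, ε₂ ≥ 0 satisfying ε₁ + ε₂ = ε, it holds that R(ε₁,ε₂|X) = R(ε,0|X) = R(0,ε|X) = H̄_ε(X). -/

import Mathlib

open Filter MeasureTheory

namespace NY

/-- A probability distribution on a set, given by its point mass function. -/
structure Dist (α : Type*) where
  p : α → ℝ
  nonneg : ∀ x, 0 ≤ p x
  hasSum : HasSum p 1

/-- The probability of a set under a distribution. -/
noncomputable def Dist.pr {α : Type*} (P : Dist α) (A : Set α) : ℝ := ∑' x : A, P.p x.1

/-- 𝒰* : nonempty finite strings over the code alphabet 𝒰 = {1,…,K}. -/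
abbrev Word (K : ℕ) := {u : List (Fin K) // u ≠ []}

/-- Length of a string, as a real number. -/
noncomputable def wlen {K : ℕ} (u : Word K) : ℝ := u.1.length

/-- Error probability of a variable-length code (φ, ψ). -/
noncomputable def errP {α : Type*} {K : ℕ} (P : Dist α) (φ : α → Word K) (ψ : Word K → α) : ℝ :=
  P.pr {x | ψ (φ x) ≠ x}

/-- Overflow probability of an encoder φ with threshold η. -/
noncomputable def ovP {α : Type*} {K : ℕ} (P : Dist α) (φ : α → Word K) (η : ℝ) : ℝ :=
  P.pr {x | wlen (φ x) > η}

/-- A general source: for each blocklength n, a distribution on 𝒳^n. -/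
abbrev Source (𝒳 : Type*) := (n : ℕ) → Dist (Fin n → 𝒳)

/-- The limit as ν ↓ 0 of a function g which is nonincreasing in ν
(the limit exists by monotonicity and equals the supremum over ν > 0). -/
noncomputable def limNu (g : ℝ → ℝ) : ℝ := sSup (g '' Set.Ioi (0 : ℝ))

variable {𝒳 : Type*}

/-- A rate R ≥ 0 is (ε,δ)-achievable. -/
def FirstAch (K : ℕ) (X : Source 𝒳) (ε δ R : ℝ) : Prop :=
  0 ≤ R ∧ ∃ (φ : ∀ n, (Fin n → 𝒳) → Word K) (ψ : ∀ n, Word K → (Fin n → 𝒳)),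
    limsup (fun n => errP (X n) (φ n) (ψ n)) atTop ≤ ε ∧
    limsup (fun n => ovP (X n) (φ n) ((n : ℝ) * R)) atTop ≤ δ

/-- The first-order (ε,δ)-optimum threshold R(ε,δ|X). -/
noncomputable def Ropt (K : ℕ) (X : Source 𝒳) (ε δ : ℝ) : ℝ :=
  sInf {R | FirstAch K X ε δ R}

/-- L is (ε,δ,R)-achievable (second order). -/
def SecondAch (K : ℕ) (X : Source 𝒳) (ε δ R L : ℝ) : Prop :=
  ∃ (φ : ∀ n, (Fin n → 𝒳) → Word K) (ψ : ∀ n, Word K → (Fin n → 𝒳)),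
    limsup (fun n => errP (X n) (φ n) (ψ n)) atTop ≤ ε ∧
    limsup (fun n => ovP (X n) (φ n) ((n : ℝ) * R + Real.sqrt (n : ℝ) * L)) atTop ≤ δ

/-- The second-order (ε,δ,R)-optimum threshold L(ε,δ,R|X). -/
noncomputable def Lopt (K : ℕ) (X : Source 𝒳) (ε δ R : ℝ) : ℝ :=
  sInf {L | SecondAch K X ε δ R L}

/-- A rate R ≥ 0 is optimistically (ε,δ)-achievable. -/
def OptFirstAch (K : ℕ) (X : Source 𝒳) (ε δ R : ℝ) : Prop :=
  0 ≤ R ∧ ∃ (φ : ∀ n, (Fin n → 𝒳) → Word K) (ψ : ∀ n, Word K → (Fin n → 𝒳)),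
    ∀ γ > (0 : ℝ), ∃ ns : ℕ → ℕ, StrictMono ns ∧ ∀ i,
      errP (X (ns i)) (φ (ns i)) (ψ (ns i)) ≤ ε + γ ∧
      ovP (X (ns i)) (φ (ns i)) ((ns i : ℝ) * R) ≤ δ + γ

/-- The optimistic first-order (ε,δ)-optimum threshold R*(ε,δ|X). -/
noncomputable def RoptStar (K : ℕ) (X : Source 𝒳) (ε δ : ℝ) : ℝ :=
  sInf {R | OptFirstAch K X ε δ R}

/-- L is optimistically (ε,δ,R)-achievable. -/
def OptSecondAch (K : ℕ) (X : Source 𝒳) (ε δ R L : ℝ) : Prop :=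
  ∃ (φ : ∀ n, (Fin n → 𝒳) → Word K) (ψ : ∀ n, Word K → (Fin n → 𝒳)),
    ∀ γ > (0 : ℝ), ∃ ns : ℕ → ℕ, StrictMono ns ∧ ∀ i,
      errP (X (ns i)) (φ (ns i)) (ψ (ns i)) ≤ ε + γ ∧
      ovP (X (ns i)) (φ (ns i)) ((ns i : ℝ) * R + Real.sqrt (ns i : ℝ) * L) ≤ δ + γ

/-- The optimistic second-order (ε,δ,R)-optimum threshold L*(ε,δ,R|X). -/
noncomputable def LoptStar (K : ℕ) (X : Source 𝒳) (ε δ R : ℝ) : ℝ :=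
  sInf {L | OptSecondAch K X ε δ R L}

/-- A rate R ≥ 0 is type I (ε,δ)-achievable. -/
def TypeIAch (K : ℕ) (X : Source 𝒳) (ε δ R : ℝ) : Prop :=
  0 ≤ R ∧ ∃ (φ : ∀ n, (Fin n → 𝒳) → Word K) (ψ : ∀ n, Word K → (Fin n → 𝒳)),
    limsup (fun n => errP (X n) (φ n) (ψ n)) atTop ≤ ε ∧
    liminf (fun n => ovP (X n) (φ n) ((n : ℝ) * R)) atTop ≤ δ

/-- R†(ε,δ|X). -/
noncomputable def Rdagger (K : ℕ) (X : Source 𝒳) (ε δ : ℝ) : ℝ :=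
  sInf {R | TypeIAch K X ε δ R}

/-- A rate R ≥ 0 is type II (ε,δ)-achievable. -/
def TypeIIAch (K : ℕ) (X : Source 𝒳) (ε δ R : ℝ) : Prop :=
  0 ≤ R ∧ ∃ (φ : ∀ n, (Fin n → 𝒳) → Word K) (ψ : ∀ n, Word K → (Fin n → 𝒳)),
    liminf (fun n => errP (X n) (φ n) (ψ n)) atTop ≤ ε ∧
    limsup (fun n => ovP (X n) (φ n) ((n : ℝ) * R)) atTop ≤ δ

/-- R‡(ε,δ|X). -/
noncomputable def Rddagger (K : ℕ) (X : Source 𝒳) (ε δ : ℝ) : ℝ :=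
  sInf {R | TypeIIAch K X ε δ R}

/-- H̄_γ(X) := inf{ R : limsup_n Pr{ (1/n) log(1/P_{X^n}(X^n)) > R } ≤ γ }. -/
noncomputable def Hbar (K : ℕ) (X : Source 𝒳) (γ : ℝ) : ℝ :=
  sInf {R | limsup (fun n =>
    (X n).pr {x | Real.logb (K : ℝ) (1 / (X n).p x) / (n : ℝ) > R}) atTop ≤ γ}

/-- H̄*_γ(X) (optimistic version, with liminf). -/
noncomputable def HbarStar (K : ℕ) (X : Source 𝒳) (γ : ℝ) : ℝ :=
  sInf {R | liminf (fun n =>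
    (X n).pr {x | Real.logb (K : ℝ) (1 / (X n).p x) / (n : ℝ) > R}) atTop ≤ γ}

/-- H̄_γ(R|X) := inf{ L : limsup_n Pr{ (1/n) log(1/P_{X^n}(X^n)) > R + L/√n } ≤ γ }. -/
noncomputable def Hbar2 (K : ℕ) (X : Source 𝒳) (γ R : ℝ) : ℝ :=
  sInf {L | limsup (fun n =>
    (X n).pr {x | Real.logb (K : ℝ) (1 / (X n).p x) / (n : ℝ)
      > R + L / Real.sqrt (n : ℝ)}) atTop ≤ γ}

/-- H̄*_γ(R|X) (optimistic version, with liminf). -/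
noncomputable def Hbar2Star (K : ℕ) (X : Source 𝒳) (γ R : ℝ) : ℝ :=
  sInf {L | liminf (fun n =>
    (X n).pr {x | Real.logb (K : ℝ) (1 / (X n).p x) / (n : ℝ)
      > R + L / Real.sqrt (n : ℝ)}) atTop ≤ γ}

/-- F(ε,R) := limsup_n inf_{A : Pr(A) ≥ 1−ε} Pr{ −(1/n) log P_{X^n}(X^n) ≥ R, X^n ∈ A }. -/
noncomputable def Fspec (K : ℕ) (X : Source 𝒳) (ε R : ℝ) : ℝ :=
  limsup (fun n =>
    sInf ((fun A : Set (Fin n → 𝒳) =>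
        (X n).pr (A ∩ {x | -Real.logb (K : ℝ) ((X n).p x) / (n : ℝ) ≥ R})) ''
      {A | (X n).pr A ≥ 1 - ε})) atTop

/-- H̃_{ε,δ}(X) := inf{ R : F(ε,R) ≤ δ }. -/
noncomputable def Htilde (K : ℕ) (X : Source 𝒳) (ε δ : ℝ) : ℝ :=
  sInf {R | Fspec K X ε R ≤ δ}

/-- G_{ε,δ}(X). -/
noncomputable def Gfirst (K : ℕ) (X : Source 𝒳) (ε δ : ℝ) : ℝ :=
  sInf {R | limNu (fun ν => limsup (fun n =>
    sInf ((fun A : Set (Fin n → 𝒳) =>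
        (X n).pr (A ∩ {x | -Real.logb (K : ℝ) ((X n).p x / (X n).pr A) / (n : ℝ) ≥ R})) ''
      {A | (X n).pr A ≥ 1 - ε - ν})) atTop) ≤ δ}

/-- G*_{ε,δ}(X) (optimistic version, with liminf). -/
noncomputable def GfirstStar (K : ℕ) (X : Source 𝒳) (ε δ : ℝ) : ℝ :=
  sInf {R | limNu (fun ν => liminf (fun n =>
    sInf ((fun A : Set (Fin n → 𝒳) =>
        (X n).pr (A ∩ {x | -Real.logb (K : ℝ) ((X n).p x / (X n).pr A) / (n : ℝ) ≥ R})) ''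
      {A | (X n).pr A ≥ 1 - ε - ν})) atTop) ≤ δ}

/-- G_{ε,δ}(R|X). -/
noncomputable def Gsecond (K : ℕ) (X : Source 𝒳) (ε δ R : ℝ) : ℝ :=
  sInf {L | limNu (fun ν => limsup (fun n =>
    sInf ((fun A : Set (Fin n → 𝒳) =>
        (X n).pr (A ∩ {x | -Real.logb (K : ℝ) ((X n).p x / (X n).pr A) / (n : ℝ)
          ≥ R + L / Real.sqrt (n : ℝ)})) ''
      {A | (X n).pr A ≥ 1 - ε - ν})) atTop) ≤ δ}

/-- G*_{ε,δ}(R|X) (optimistic version, with liminf). -/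
noncomputable def GsecondStar (K : ℕ) (X : Source 𝒳) (ε δ R : ℝ) : ℝ :=
  sInf {L | limNu (fun ν => liminf (fun n =>
    sInf ((fun A : Set (Fin n → 𝒳) =>
        (X n).pr (A ∩ {x | -Real.logb (K : ℝ) ((X n).p x / (X n).pr A) / (n : ℝ)
          ≥ R + L / Real.sqrt (n : ℝ)})) ''
      {A | (X n).pr A ≥ 1 - ε - ν})) atTop) ≤ δ}

/-- A rate R is optimistically ε-achievable by fixed-length codes. -/
def FixAchR (K : ℕ) (X : Source 𝒳) (ε R : ℝ) : Prop :=
  ∃ (M : ℕ → ℕ) (φ : ∀ n, (Fin n → 𝒳) → Fin (M n)) (ψ : ∀ n, Fin (M n) → (Fin n → 𝒳)),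
    ∀ γ > (0 : ℝ), ∃ ns : ℕ → ℕ, StrictMono ns ∧ ∀ i,
      (X (ns i)).pr {x | ψ (ns i) (φ (ns i) x) ≠ x} ≤ ε + γ ∧
      Real.logb (K : ℝ) (M (ns i) : ℝ) / (ns i : ℝ) ≤ R + γ

/-- R^f(ε|X). -/
noncomputable def Rfix (K : ℕ) (X : Source 𝒳) (ε : ℝ) : ℝ :=
  sInf {R | FixAchR K X ε R}

/-- A real L is optimistically (ε,R)-achievable by fixed-length codes. -/
def FixAchL (K : ℕ) (X : Source 𝒳) (ε R L : ℝ) : Prop :=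
  ∃ (M : ℕ → ℕ) (φ : ∀ n, (Fin n → 𝒳) → Fin (M n)) (ψ : ∀ n, Fin (M n) → (Fin n → 𝒳)),
    ∀ γ > (0 : ℝ), ∃ ns : ℕ → ℕ, StrictMono ns ∧ ∀ i,
      (X (ns i)).pr {x | ψ (ns i) (φ (ns i) x) ≠ x} ≤ ε + γ ∧
      Real.logb (K : ℝ) ((M (ns i) : ℝ) / (K : ℝ) ^ ((ns i : ℝ) * R)) / Real.sqrt (ns i : ℝ)
        ≤ L + γ

/-- L^f(ε,R|X). -/
noncomputable def Lfix (K : ℕ) (X : Source 𝒳) (ε R : ℝ) : ℝ :=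
  sInf {L | FixAchL K X ε R L}

section Aux


variable {α : Type*} (P : Dist α)

lemma Dist.summable : Summable P.p := P.hasSum.summable

lemma Dist.tsum_eq : ∑' x, P.p x = 1 := P.hasSum.tsum_eq

lemma Dist.nonempty' (Q : Dist α) : Nonempty α := by
  have hs := Q.hasSum
  by_contra h
  rw [not_nonempty_iff] at h
  have h0 : Q.p = fun _ => 0 := funext fun x => (h.false x).elim
  have := hs.unique (h0 ▸ hasSum_zero)
  norm_num at this

lemma Dist.pr_eq (A : Set α) : P.pr A = ∑' x, A.indicator P.p x := tsum_subtype A P.p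

lemma Dist.summable_ind (A : Set α) : Summable (A.indicator P.p) := P.summable.indicator A

lemma Dist.ind_le (A : Set α) (x : α) : A.indicator P.p x ≤ P.p x := by
  classical
  by_cases h : x ∈ A <;> simp [Set.indicator_apply, h, P.nonneg x]

lemma Dist.ind_nonneg (A : Set α) (x : α) : 0 ≤ A.indicator P.p x := by
  classical
  by_cases h : x ∈ A <;> simp [Set.indicator_apply, h, P.nonneg x]

lemma Dist.pr_nonneg (A : Set α) : 0 ≤ P.pr A := by
  rw [P.pr_eq]
  exact tsum_nonneg (P.ind_nonneg A)

lemma Dist.pr_le_one (A : Set α) : P.pr A ≤ 1 := by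
  rw [P.pr_eq, ← P.tsum_eq]
  exact Summable.tsum_le_tsum (P.ind_le A) (P.summable_ind A) P.summable

/-- key monotonicity: if `A ∩ {p ≠ 0} ⊆ B` then `pr A ≤ pr B`. -/
lemma Dist.pr_mono' {A B : Set α} (h : ∀ x ∈ A, P.p x ≠ 0 → x ∈ B) : P.pr A ≤ P.pr B := by
  rw [P.pr_eq, P.pr_eq]
  refine Summable.tsum_le_tsum (fun x => ?_) (P.summable_ind A) (P.summable_ind B)
  classical
  by_cases hx : x ∈ A
  · by_cases hp : P.p x = 0
    · by_cases hb : x ∈ B <;> simp [Set.indicator_apply, hx, hb, hp, le_refl]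
    · simp [Set.indicator_apply, hx, h x hx hp]
  · simp [Set.indicator_apply, hx]
    exact P.ind_nonneg B x

lemma Dist.pr_mono {A B : Set α} (h : A ⊆ B) : P.pr A ≤ P.pr B :=
  P.pr_mono' (fun x hx _ => h hx)

lemma Dist.pr_union_le (A B : Set α) : P.pr (A ∪ B) ≤ P.pr A + P.pr B := by
  rw [P.pr_eq, P.pr_eq, P.pr_eq, ← Summable.tsum_add (P.summable_ind A) (P.summable_ind B)]
  refine Summable.tsum_le_tsum (fun x => ?_) (P.summable_ind _)
    ((P.summable_ind A).add (P.summable_ind B))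
  classical
  by_cases ha : x ∈ A <;> by_cases hb : x ∈ B <;>
    simp [Set.indicator_apply, ha, hb, P.nonneg x, le_add_of_nonneg_right, le_add_of_nonneg_left]

lemma Dist.pr_finset (t : Finset α) : P.pr ↑t = ∑ x ∈ t, P.p x := by
  rw [Dist.pr]
  exact Finset.tsum_subtype t P.p

/-- additivity: `t ⊆ C` finite, then `pr C = pr (C \ t) + ∑ t`. -/
lemma Dist.pr_diff_finset {C : Set α} {t : Finset α} (h : ↑t ⊆ C) :
    P.pr C = P.pr (C \ ↑t) + ∑ x ∈ t, P.p x := by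
  classical
  rw [P.pr_eq, P.pr_eq, ← P.pr_finset, P.pr_eq, ← Summable.tsum_add (P.summable_ind _) (P.summable_ind _)]
  congr 1
  funext x
  by_cases ht : x ∈ t
  · simp [Set.indicator_apply, h ht, ht]
  · by_cases hc : x ∈ C <;> simp [Set.indicator_apply, ht, hc]

lemma Dist.pr_univ : P.pr Set.univ = 1 := by
  rw [P.pr_eq, ← P.tsum_eq]; simp

/-- bound for a finite set with small atoms. -/
lemma Dist.pr_finite_le {A : Set α} (hA : A.Finite) {c : ℝ} (h : ∀ x ∈ A, P.p x ≤ c) :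
    P.pr A ≤ (A.ncard : ℝ) * c := by
  classical
  have : P.pr A = ∑ x ∈ hA.toFinset, P.p x := by
    rw [← P.pr_finset]; congr; simp
  rw [this]
  have := Finset.sum_le_card_nsmul hA.toFinset P.p c (fun x hx => h x (by simpa using hx))
  rw [nsmul_eq_mul] at this
  calc ∑ x ∈ hA.toFinset, P.p x ≤ hA.toFinset.card * c := this
    _ = (A.ncard : ℝ) * c := by rw [Set.ncard_eq_toFinset_card _ hA]
  
/-- sets where p exceeds a positive constant are finite. -/
lemma Dist.finite_gt {c : ℝ} (hc : 0 < c) : {x | c < P.p x}.Finite := by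
  have h := P.summable.tendsto_cofinite_zero
  have : ∀ᶠ x in cofinite, P.p x < c := h.eventually (gt_mem_nhds hc)
  rw [Filter.eventually_cofinite] at this
  exact this.subset (fun x hx => by simp at hx ⊢; linarith [hx])

/-- cardinality bound: if p > c on A then `A.ncard * c ≤ 1`. -/
lemma Dist.ncard_le {A : Set α} {c : ℝ} (hc : 0 < c) (h : ∀ x ∈ A, c < P.p x) :
    (A.ncard : ℝ) * c ≤ 1 := by
  classical
  have hA : A.Finite := (P.finite_gt hc).subset (fun x hx => h x hx)
  have h1 : ∑ x ∈ hA.toFinset, P.p x ≤ 1 := by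
    rw [← P.pr_finset, ← P.tsum_eq]
    have := P.pr_le_one ↑hA.toFinset
    rw [P.tsum_eq]; simpa using this
  have h2 : (hA.toFinset.card : ℝ) * c ≤ ∑ x ∈ hA.toFinset, P.p x := by
    have := Finset.card_nsmul_le_sum hA.toFinset P.p c (fun x hx => (h x (by simpa using hx)).le)
    rwa [nsmul_eq_mul] at this
  rw [Set.ncard_eq_toFinset_card _ hA]
  linarith

lemma Dist.pr_empty : P.pr ∅ = 0 := by
  rw [P.pr_eq]; simp

lemma greedy {p : α → ℝ} (hp : ∀ x, 0 ≤ p x) {c b : ℝ} (hb : 0 ≤ b) :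
    ∀ s : Finset α, (∀ x ∈ s, p x ≤ c) →
      ∃ t ⊆ s, ∑ x ∈ t, p x ≤ b ∧ (b - c < ∑ x ∈ t, p x ∨ t = s) := by
  classical
  intro s
  induction s using Finset.strongInduction with
  | _ s ih =>
    intro hs
    by_cases hsum : ∑ x ∈ s, p x ≤ b
    · exact ⟨s, le_refl s, hsum, Or.inr rfl⟩
    · push_neg at hsum
      have hne : s.Nonempty := by
        by_contra h
        rw [Finset.not_nonempty_iff_eq_empty] at h
        simp [h] at hsum; linarith
      obtain ⟨x, hx⟩ := hne
      have hlt : s.erase x ⊂ s := Finset.erase_ssubset hx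
      obtain ⟨t, ht, htb, hor⟩ := ih (s.erase x) hlt
        (fun y hy => hs y (Finset.mem_of_mem_erase hy))
      refine ⟨t, ht.trans (Finset.erase_subset _ _), htb, ?_⟩
      rcases hor with h | h
      · exact Or.inl h
      · left
        have : ∑ y ∈ s.erase x, p y = ∑ y ∈ s, p y - p x :=
          by rw [Finset.sum_erase_eq_sub hx]
        rw [h, this]
        have := hs x hx
        linarith

lemma Dist.split {C : Set α} {c b : ℝ} (hc : 0 < c) (hb : 0 ≤ b)
    (hatom : ∀ x ∈ C, P.p x ≤ c) :
    ∃ O, O ⊆ C ∧ P.pr O ≤ b ∧ P.pr (C \ O) ≤ max (P.pr C - b) 0 + c := by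
  classical
  by_cases hCb : P.pr C ≤ b
  · refine ⟨C, le_refl C, hCb, ?_⟩
    rw [Set.diff_self, P.pr_empty]
    positivity
  · push_neg at hCb
    have hhs : HasSum (C.indicator P.p) (P.pr C) := by
      rw [P.pr_eq]; exact (P.summable_ind C).hasSum
    have hT : Tendsto (fun s : Finset α => ∑ x ∈ s, C.indicator P.p x) atTop (nhds (P.pr C)) :=
      hhs
    have : ∀ᶠ s : Finset α in atTop, b < ∑ x ∈ s, C.indicator P.p x :=
      hT.eventually (eventually_gt_nhds hCb)
    obtain ⟨s, hs⟩ := this.exists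
    set s' : Finset α := s.filter (· ∈ C) with hs'
    have hsum' : ∑ x ∈ s', P.p x = ∑ x ∈ s, C.indicator P.p x := by
      rw [hs', Finset.sum_filter]
      exact Finset.sum_congr rfl fun x _ => by
        by_cases h : x ∈ C <;> simp [Set.indicator_apply, h]
    have hmem : ∀ x ∈ s', P.p x ≤ c := fun x hx =>
      hatom x (by simp [hs'] at hx; exact hx.2)
    obtain ⟨t, hts, htb, hor⟩ := greedy P.nonneg hb s' hmem
    have htC : (↑t : Set α) ⊆ C := fun x hx => by
      have := hts hx; simp [hs'] at this; exact this.2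
    have hbig : b - c < ∑ x ∈ t, P.p x := by
      rcases hor with h | h
      · exact h
      · rw [h, hsum']; linarith [hc]
    refine ⟨↑t, htC, ?_, ?_⟩
    · rw [P.pr_finset]; exact htb
    · have := P.pr_diff_finset htC
      have h2 : P.pr C - b ≤ max (P.pr C - b) 0 := le_max_left _ _
      linarith
lemma limsup_le_of_forall_eventually {f : ℕ → ℝ} {x : ℝ} (h0 : ∀ n, 0 ≤ f n)
    (h : ∀ θ : ℝ, 0 < θ → ∀ᶠ n in atTop, f n ≤ x + θ) : limsup f atTop ≤ x := by
  refine le_of_forall_pos_le_add fun θ hθ => ?_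
  exact limsup_le_of_le (isCoboundedUnder_le_of_le atTop h0) (h θ hθ)

lemma eventually_le_of_limsup_le {f : ℕ → ℝ} {a θ : ℝ} (h1 : ∀ n, f n ≤ 1)
    (h : limsup f atTop ≤ a) (hθ : 0 < θ) : ∀ᶠ n in atTop, f n ≤ a + θ := by
  have hb : IsBoundedUnder (· ≤ ·) atTop f := isBoundedUnder_of ⟨1, h1⟩
  have := eventually_lt_of_limsup_lt (lt_of_le_of_lt h (by linarith : a < a + θ)) hb
  exact this.mono fun n hn => hn.le

/-- word from a nonempty list has positive length -/
lemma Word.one_le_length {K : ℕ} (u : Word K) : 1 ≤ u.1.length :=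
  List.length_pos_iff.mpr u.2

lemma Dist.pr_le_of_inj {K m : ℕ} (hK : 0 < K) {D : Set α} (φ : α → Word K)
    (hinj : Set.InjOn φ D) (hlen : ∀ x ∈ D, (φ x).1.length ≤ m) {c : ℝ} (hc : 0 ≤ c)
    (hp : ∀ x ∈ D, P.p x ≤ c) : P.pr D ≤ ((m * K ^ m : ℕ) : ℝ) * c := by
  classical
  rcases Nat.eq_zero_or_pos m with hm | hm
  · have hD : D = ∅ := by
      ext x; simp only [Set.mem_empty_iff_false, iff_false]
      intro hx
      have := hlen x hx
      have := Word.one_le_length (φ x)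
      omega
    rw [hD, P.pr_empty]
    positivity
  · set pk : Word K → Fin m × (Fin m → Fin K) := fun u =>
      (⟨min (u.1.length - 1) (m - 1), by omega⟩, fun i => u.1.getD i ⟨0, hK⟩) with hpk
    have hinj' : Set.InjOn (fun x => pk (φ x)) D := by
      intro x hx y hy hxy
      have h1x := Word.one_le_length (φ x)
      have h1y := Word.one_le_length (φ y)
      have hlx := hlen x hx
      have hly := hlen y hy
      have hfst := congrArg Prod.fst hxy
      simp only [hpk] at hfst
      have hlenxy : (φ x).1.length = (φ y).1.length := by
        have := Fin.mk.injEq .. ▸ hfst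
        have h2 : min ((φ x).1.length - 1) (m-1) = min ((φ y).1.length - 1) (m-1) :=
          congrArg Fin.val hfst
        omega
      have hsnd := congrArg Prod.snd hxy
      have heq : (φ x).1 = (φ y).1 := by
        refine List.ext_getElem hlenxy fun i hi1 hi2 => ?_
        have him : i < m := lt_of_lt_of_le hi1 hlx
        have := congrFun hsnd ⟨i, him⟩
        simp only [hpk] at this
        rwa [List.getD_eq_getElem _ _ hi1, List.getD_eq_getElem _ _ hi2] at this
      exact hinj hx hy (Subtype.ext heq)
    have hfin : D.Finite := by
      refine Set.Finite.of_finite_image ?_ hinj'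
      exact Set.toFinite _
    have hcard : (D.ncard : ℝ) ≤ ((m * K ^ m : ℕ) : ℝ) := by
      have := Set.ncard_le_ncard_of_injOn (fun x => pk (φ x))
        (fun x _ => Set.mem_univ _) hinj' (Set.finite_univ)
      rw [Set.ncard_univ, Nat.card_eq_fintype_card] at this
      simp only [Fintype.card_prod, Fintype.card_fun, Fintype.card_fin] at this
      exact_mod_cast this
    calc P.pr D ≤ (D.ncard : ℝ) * c := P.pr_finite_le hfin hp
      _ ≤ _ := mul_le_mul_of_nonneg_right hcard hc
end Aux
/-- Per-blocklength code construction. -/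
lemma exists_code {α : Type*} [Countable α] (P : Dist α) {K : ℕ} (hK : 2 ≤ K)
    (ℓ : ℕ) (hℓ : 1 ≤ ℓ) {b : ℝ} (hb : 0 ≤ b) :
    ∃ (φ : α → Word K) (ψ : Word K → α) (O : Set α),
      P.pr O ≤ b ∧
      P.pr {x | ψ (φ x) ≠ x} ≤
        max (P.pr {x | P.p x ≤ ((K : ℝ) ^ ℓ)⁻¹} - b) 0 + ((K : ℝ) ^ ℓ)⁻¹ ∧
      ∀ x, x ∉ O → (φ x).1.length = ℓ := by
  classical
  have hK0 : 0 < K := by omega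
  have hKR : (1 : ℝ) < (K : ℝ) := by exact_mod_cast hK.trans_lt' one_lt_two
  set c : ℝ := ((K : ℝ) ^ ℓ)⁻¹ with hc
  have hc0 : 0 < c := by positivity
  set A : Set α := {x | c < P.p x} with hA
  set C : Set α := {x | P.p x ≤ c} with hC
  have hatom : ∀ x ∈ C, P.p x ≤ c := fun x hx => hx
  obtain ⟨O, hOC, hOb, hsplit⟩ := P.split hc0 hb hatom
  -- A is finite with at most K^ℓ elements
  have hAfin : A.Finite := P.finite_gt hc0
  have hAcard : A.ncard ≤ K ^ ℓ := by
    have h1 := P.ncard_le hc0 (fun x hx => hx)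
    have h2 : (A.ncard : ℝ) ≤ (K : ℝ) ^ ℓ := by
      rw [hc] at h1
      have hKl : (0:ℝ) < (K:ℝ) ^ ℓ := by positivity
      calc (A.ncard : ℝ) = A.ncard * ((K:ℝ)^ℓ)⁻¹ * (K:ℝ)^ℓ := by field_simp
        _ ≤ 1 * (K:ℝ)^ℓ := by apply mul_le_mul_of_nonneg_right h1 hKl.le
        _ = (K:ℝ)^ℓ := one_mul _
    exact_mod_cast h2
  haveI : Fintype ↥A := hAfin.fintype
  have hcard' : Fintype.card ↥A ≤ Fintype.card (Fin ℓ → Fin K) := by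
    rw [Fintype.card_fun, Fintype.card_fin, Fintype.card_fin]
    rwa [← Nat.card_coe_set_eq, Nat.card_eq_fintype_card] at hAcard
  obtain ⟨emb⟩ := Function.Embedding.nonempty_of_card_le hcard'
  haveI : Nonempty α := P.nonempty'
  obtain ⟨e, he⟩ := countable_iff_exists_injective α |>.mp ‹Countable α›
  set z : Fin K := ⟨0, hK0⟩ with hz
  set φ : α → Word K := fun x =>
    if hx : x ∈ A then ⟨List.ofFn (emb ⟨x, hx⟩), by
      apply List.ne_nil_of_length_pos; rw [List.length_ofFn]; omega⟩
    else if x ∈ O then ⟨List.replicate (ℓ + 1 + e x) z, by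
      apply List.ne_nil_of_length_pos; rw [List.length_replicate]; omega⟩
    else ⟨List.replicate ℓ z, by
      apply List.ne_nil_of_length_pos; rw [List.length_replicate]; omega⟩ with hφ
  set ψ : Word K → α := fun u =>
    if hu : ∃ a : ↥A, List.ofFn (emb a) = u.1 then (Classical.choose hu : ↥A).1
    else Function.invFun e (u.1.length - (ℓ + 1)) with hψ
  have hdecA : ∀ x (hx : x ∈ A), ψ (φ x) = x := by
    intro x hx
    have hφx : (φ x).1 = List.ofFn (emb ⟨x, hx⟩) := by rw [hφ]; simp [hx]
    have hex : ∃ a : ↥A, List.ofFn (emb a) = (φ x).1 := ⟨⟨x, hx⟩, hφx.symm⟩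
    rw [hψ]
    simp only [dif_pos hex]
    have hsp := Classical.choose_spec hex
    have hsp2 : List.ofFn (emb (Classical.choose hex)) = List.ofFn (emb ⟨x, hx⟩) :=
      hsp.trans hφx
    have h3 : Classical.choose hex = ⟨x, hx⟩ := emb.injective (List.ofFn_inj.mp hsp2)
    rw [h3]
  have hdecO : ∀ x, x ∉ A → x ∈ O → ψ (φ x) = x := by
    intro x hxA hxO
    have hφx : (φ x).1 = List.replicate (ℓ + 1 + e x) z := by rw [hφ]; simp [hxA, hxO]
    have hnex : ¬ ∃ a : ↥A, List.ofFn (emb a) = (φ x).1 := by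
      rintro ⟨a, ha⟩
      rw [hφx] at ha
      have := congrArg List.length ha
      rw [List.length_ofFn, List.length_replicate] at this
      omega
    rw [hψ]
    simp only [dif_neg hnex]
    rw [hφx, List.length_replicate]
    have : ℓ + 1 + e x - (ℓ + 1) = e x := by omega
    rw [this]
    exact Function.leftInverse_invFun he x
  refine ⟨φ, ψ, O, hOb, ?_, ?_⟩
  · refine le_trans (P.pr_mono ?_) hsplit
    intro x hx
    simp only [Set.mem_setOf_eq] at hx
    by_cases hxA : x ∈ A
    · exact absurd (hdecA x hxA) hx
    · by_cases hxO : x ∈ O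
      · exact absurd (hdecO x hxA hxO) hx
      · refine ⟨?_, hxO⟩
        rw [hC]; simp only [Set.mem_setOf_eq]
        rw [hA] at hxA; simp only [Set.mem_setOf_eq, not_lt] at hxA
        exact hxA
  · intro x hxO
    by_cases hxA : x ∈ A
    · rw [hφ]; simp [hxA, List.length_ofFn]
    · rw [hφ]; simp [hxA, hxO, List.length_replicate]
/-- Achievability: if `R` is in the H̄ set for `ε` then `R + γ` is `(a,b)`-achievable
whenever `a + b = ε`. -/
lemma ach_lemma {𝒳 : Type*} [Countable 𝒳] {K : ℕ} (hK : 2 ≤ K) (X : Source 𝒳)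
    {ε a b R γ : ℝ} (ha : 0 ≤ a) (hb : 0 ≤ b) (hab : a + b = ε) (hR0 : 0 ≤ R)
    (hq : limsup (fun n => (X n).pr
      {x | Real.logb (K : ℝ) (1 / (X n).p x) / (n : ℝ) > R}) atTop ≤ ε)
    (hγ : 0 < γ) : FirstAch K X a b (R + γ) := by
  classical
  have hKR : (1 : ℝ) < (K : ℝ) := by exact_mod_cast hK.trans_lt' one_lt_two
  set τ : ℝ := R + γ / 2 with hτ
  have hτ0 : 0 < τ := by positivity
  set ℓ : ℕ → ℕ := fun n => ⌊(n : ℝ) * τ⌋₊ + 1 with hℓ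
  have hℓ1 : ∀ n, 1 ≤ ℓ n := fun n => Nat.le_add_left 1 _
  have hℓgt : ∀ n : ℕ, (n : ℝ) * τ < (ℓ n : ℝ) := by
    intro n
    have := Nat.lt_floor_add_one ((n : ℝ) * τ)
    rw [hℓ]; push_cast; linarith
  have hℓle : ∀ n : ℕ, (2 : ℝ) / γ ≤ n → (ℓ n : ℝ) ≤ (n : ℝ) * (R + γ) := by
    intro n hn
    have h1 : (⌊(n : ℝ) * τ⌋₊ : ℝ) ≤ (n : ℝ) * τ := Nat.floor_le (by positivity)
    have h2 : (1 : ℝ) ≤ (n : ℝ) * (γ / 2) := by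
      rw [div_le_iff₀ hγ] at hn
      nlinarith
    rw [hℓ]; push_cast
    rw [hτ] at h1 ⊢
    nlinarith
  choose φ ψ O hOb herr hlen using fun n =>
    exists_code (X n) hK (ℓ n) (hℓ1 n) hb
  set q : ℕ → ℝ := fun n => (X n).pr
      {x | Real.logb (K : ℝ) (1 / (X n).p x) / (n : ℝ) > R} with hqdef
  set c : ℕ → ℝ := fun n => ((K : ℝ) ^ ℓ n)⁻¹ with hcdef
  have hc0 : ∀ n, 0 < c n := fun n => by rw [hcdef]; positivity
  -- pr C_n ≤ q n  for n ≥ 1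
  have hCq : ∀ n : ℕ, 1 ≤ n → (X n).pr {x | (X n).p x ≤ c n} ≤ q n := by
    intro n hn
    refine (X n).pr_mono' (fun x hx hp0 => ?_)
    simp only [Set.mem_setOf_eq] at hx ⊢
    have hp : 0 < (X n).p x := lt_of_le_of_ne ((X n).nonneg x) (Ne.symm hp0)
    have h1 : (K : ℝ) ^ ℓ n ≤ 1 / (X n).p x := by
      rw [le_div_iff₀ hp]
      calc (K : ℝ) ^ ℓ n * (X n).p x ≤ (K : ℝ) ^ ℓ n * c n :=
        mul_le_mul_of_nonneg_left hx (by positivity)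
        _ = 1 := by rw [hcdef]; field_simp
    have h2 : (ℓ n : ℝ) ≤ Real.logb (K : ℝ) (1 / (X n).p x) := by
      have := Real.logb_le_logb_of_le hKR (by positivity : (0:ℝ) < (K:ℝ) ^ ℓ n) h1
      rwa [show ((K : ℝ) ^ ℓ n) = (K : ℝ) ^ (ℓ n : ℝ) by rw [Real.rpow_natCast],
        Real.logb_rpow (by linarith) (by linarith)] at this
    have hn0 : (0 : ℝ) < n := by exact_mod_cast hn
    rw [gt_iff_lt, lt_div_iff₀ hn0]
    calc R * n < (n : ℝ) * τ := by rw [hτ]; push_cast; nlinarith [hn0]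
      _ < (ℓ n : ℝ) := hℓgt n
      _ ≤ _ := h2
  refine ⟨by linarith, φ, ψ, ?_, ?_⟩
  · -- error probability
    refine limsup_le_of_forall_eventually (fun n => (X n).pr_nonneg _) ?_
    intro θ hθ
    have hev1 : ∀ᶠ n in atTop, q n ≤ ε + θ / 2 :=
      eventually_le_of_limsup_le (fun n => (X n).pr_le_one _) hq (by linarith)
    have hev2 : ∀ᶠ n in atTop, c n ≤ θ / 2 := by
      rw [eventually_atTop]
      refine ⟨max 1 (⌈4 / (γ * θ)⌉₊ + 1), fun n hn => ?_⟩
      have hn1 : 1 ≤ n := le_trans (le_max_left _ _) hn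
      have hn2 : 4 / (γ * θ) ≤ (n : ℝ) := by
        have : (⌈4 / (γ * θ)⌉₊ : ℝ) ≤ n := by
          exact_mod_cast le_trans (Nat.le_succ _) (le_trans (le_max_right _ _) hn)
        linarith [Nat.le_ceil (4 / (γ * θ))]
      have hn0 : (0 : ℝ) < n := by exact_mod_cast hn1
      have hKl : (n : ℝ) * (γ / 2) ≤ (K : ℝ) ^ ℓ n := by
        have h2l : (ℓ n : ℝ) ≤ (2 : ℝ) ^ ℓ n := by
          exact_mod_cast (Nat.lt_two_pow_self (n := ℓ n)).le
        have h2K : (2 : ℝ) ^ ℓ n ≤ (K : ℝ) ^ ℓ n :=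
          pow_le_pow_left₀ (by norm_num) (by exact_mod_cast hK) _
        have hgt := hℓgt n
        have hτγ : (n : ℝ) * (γ / 2) ≤ (n : ℝ) * τ := by
          apply mul_le_mul_of_nonneg_left _ hn0.le
          rw [hτ]; linarith
        calc (n : ℝ) * (γ / 2) ≤ (n : ℝ) * τ := hτγ
          _ ≤ (ℓ n : ℝ) := hgt.le
          _ ≤ (2 : ℝ) ^ ℓ n := h2l
          _ ≤ (K : ℝ) ^ ℓ n := h2K
      have hpos : (0 : ℝ) < (n : ℝ) * (γ / 2) := by positivity
      have h1 : c n ≤ ((n : ℝ) * (γ / 2))⁻¹ := by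
        rw [hcdef]
        exact inv_anti₀ hpos hKl
      have h2 : ((n : ℝ) * (γ / 2))⁻¹ ≤ θ / 2 := by
        rw [inv_le_iff_one_le_mul₀ hpos]
        have hγθ : 0 < γ * θ := by positivity
        rw [div_le_iff₀ hγθ] at hn2
        nlinarith
      linarith
    filter_upwards [hev1, hev2, eventually_ge_atTop 1] with n h1 h2 h3
    have := herr n
    have hCq' := hCq n h3
    have hmax : max ((X n).pr {x | (X n).p x ≤ c n} - b) 0 ≤ a + θ / 2 := by
      rw [max_le_iff]
      constructor
      · linarith
      · linarith
    calc errP (X n) (φ n) (ψ n) ≤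
        max ((X n).pr {x | (X n).p x ≤ ((K:ℝ) ^ ℓ n)⁻¹} - b) 0 + ((K:ℝ) ^ ℓ n)⁻¹ := this
      _ ≤ a + θ / 2 + θ / 2 := by
          rw [hcdef] at hmax h2
          exact add_le_add hmax h2
      _ = a + θ := by ring
  · -- overflow probability
    have hev : ∀ᶠ n in atTop, ovP (X n) (φ n) ((n : ℝ) * (R + γ)) ≤ b := by
      rw [eventually_atTop]
      refine ⟨⌈(2 : ℝ) / γ⌉₊, fun n hn => ?_⟩
      have hn2 : (2 : ℝ) / γ ≤ n := le_trans (Nat.le_ceil _) (by exact_mod_cast hn)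
      refine le_trans ((X n).pr_mono ?_) (hOb n)
      intro x hx
      simp only [Set.mem_setOf_eq] at hx
      by_contra hxO
      have := hlen n x hxO
      rw [wlen, this] at hx
      exact absurd (hℓle n hn2) (by linarith)
    exact limsup_le_of_le (isCoboundedUnder_le_of_le atTop
      (fun n => (X n).pr_nonneg _)) hev
/-- Converse: an `(a,b)`-achievable rate `R` satisfies the H̄ bound at `R + γ`. -/
lemma conv_lemma {𝒳 : Type*} [Countable 𝒳] {K : ℕ} (hK : 2 ≤ K) (X : Source 𝒳)
    {ε a b R γ : ℝ} (hsum : a + b ≤ ε) (hγ : 0 < γ)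
    (hach : FirstAch K X a b R) :
    limsup (fun n => (X n).pr
      {x | Real.logb (K : ℝ) (1 / (X n).p x) / (n : ℝ) > R + γ}) atTop ≤ ε := by
  classical
  obtain ⟨hR0, φ, ψ, herr, hov⟩ := hach
  have hKR : (1 : ℝ) < (K : ℝ) := by exact_mod_cast hK.trans_lt' one_lt_two
  have hK0 : 0 < K := by omega
  refine limsup_le_of_forall_eventually (fun n => (X n).pr_nonneg _) ?_
  intro θ hθ
  have hev1 : ∀ᶠ n in atTop, errP (X n) (φ n) (ψ n) ≤ a + θ / 3 :=
    eventually_le_of_limsup_le (fun n => (X n).pr_le_one _) herr (by linarith)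
  have hev2 : ∀ᶠ n in atTop, ovP (X n) (φ n) ((n : ℝ) * R) ≤ b + θ / 3 :=
    eventually_le_of_limsup_le (fun n => (X n).pr_le_one _) hov (by linarith)
  -- the "small codeword count" term tends to zero
  set r : ℝ := (K : ℝ) ^ (-γ : ℝ) with hr
  have hr0 : 0 ≤ r := Real.rpow_nonneg (by positivity) _
  have hr1 : r < 1 := Real.rpow_lt_one_of_one_lt_of_neg hKR (by linarith)
  have hg : Tendsto (fun n : ℕ => ((n : ℝ) * R + ↑K) * r ^ n) atTop (nhds 0) := by
    have h1 := tendsto_self_mul_const_pow_of_lt_one hr0 hr1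
    have h2 := tendsto_pow_atTop_nhds_zero_of_lt_one hr0 hr1
    have := ((h1.const_mul R).add (h2.const_mul (K : ℝ)))
    simpa only [mul_zero, add_zero, zero_add] using this.congr (fun n => by ring)
  have hev3 : ∀ᶠ n : ℕ in atTop, ((n : ℝ) * R + ↑K) * r ^ n ≤ θ / 3 :=
    (hg.eventually (gt_mem_nhds (by linarith : (0:ℝ) < θ / 3))).mono fun n hn => hn.le
  filter_upwards [hev1, hev2, hev3, eventually_ge_atTop 1] with n h1 h2 h3 hn1
  set P := X n with hP
  have hn0 : (0 : ℝ) < n := by exact_mod_cast hn1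
  set S : Set (Fin n → 𝒳) :=
    {x | Real.logb (K : ℝ) (1 / P.p x) / (n : ℝ) > R + γ} with hS
  set E : Set (Fin n → 𝒳) := {x | ψ n (φ n x) ≠ x} with hE
  set V : Set (Fin n → 𝒳) := {x | wlen (φ n x) > (n : ℝ) * R} with hV
  set D : Set (Fin n → 𝒳) := S ∩ (Eᶜ ∩ Vᶜ) with hD
  have hsub : S ⊆ E ∪ (V ∪ D) := by
    intro x hx
    by_cases he : x ∈ E
    · exact Or.inl he
    · by_cases hv : x ∈ V
      · exact Or.inr (Or.inl hv)
      · exact Or.inr (Or.inr ⟨hx, he, hv⟩)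
  set c : ℝ := ((K : ℝ) ^ ((n : ℝ) * (R + γ)))⁻¹ with hc
  have hc0 : (0 : ℝ) < c := by
    rw [hc]; positivity
  have hpD : ∀ x ∈ D, P.p x ≤ c := by
    rintro x ⟨hxS, -, -⟩
    rw [hS, Set.mem_setOf_eq, gt_iff_lt, lt_div_iff₀ hn0] at hxS
    have hp0 : P.p x ≠ 0 := by
      intro h0
      rw [h0] at hxS
      simp only [div_zero, Real.logb_zero] at hxS
      nlinarith
    have hp : 0 < P.p x := lt_of_le_of_ne (P.nonneg x) (Ne.symm hp0)
    have h1p : 0 < 1 / P.p x := by positivity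
    have hlt : (K : ℝ) ^ ((n : ℝ) * (R + γ)) < 1 / P.p x := by
      rw [← Real.lt_logb_iff_rpow_lt hKR h1p]
      nlinarith
    have h4 : (1 / P.p x)⁻¹ ≤ ((K : ℝ) ^ ((n : ℝ) * (R + γ)))⁻¹ :=
      inv_anti₀ (by positivity) hlt.le
    rw [one_div, inv_inv] at h4
    rw [hc]; exact h4
  have hm : ∀ x ∈ D, ((φ n) x).1.length ≤ ⌊(n : ℝ) * R⌋₊ := by
    rintro x ⟨-, -, hv⟩
    rw [hV] at hv
    simp only [Set.mem_compl_iff, Set.mem_setOf_eq, not_lt, wlen] at hv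
    exact Nat.le_floor (by exact_mod_cast hv)
  have hinj : Set.InjOn (φ n) D := by
    rintro x ⟨-, hex, -⟩ y ⟨-, hey, -⟩ hxy
    rw [hE, Set.mem_compl_iff, Set.mem_setOf_eq, not_not] at hex hey
    rw [← hex, ← hey, hxy]
  set m : ℕ := ⌊(n : ℝ) * R⌋₊ with hm'
  have hDle : P.pr D ≤ ((m * K ^ m : ℕ) : ℝ) * c :=
    P.pr_le_of_inj hK0 (φ n) hinj hm hc0.le hpD
  have hgle : ((m * K ^ m : ℕ) : ℝ) * c ≤ ((n : ℝ) * R + ↑K) * r ^ n := by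
    have hmle : (m : ℝ) ≤ (n : ℝ) * R := Nat.floor_le (by positivity)
    have hKm : ((K : ℝ) ^ m : ℝ) ≤ (K : ℝ) ^ ((n : ℝ) * R) := by
      rw [← Real.rpow_natCast (K : ℝ) m]
      exact Real.rpow_le_rpow_of_exponent_le hKR.le hmle
    have hKm0 : (0 : ℝ) < (K : ℝ) ^ ((n : ℝ) * R) := Real.rpow_pos_of_pos (by positivity) _
    have step1 : ((m * K ^ m : ℕ) : ℝ) ≤ ((n : ℝ) * R + ↑K) * (K : ℝ) ^ ((n : ℝ) * R) := by
      push_cast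
      have hm0 : (0 : ℝ) ≤ (m : ℝ) := by positivity
      have hKm' : (0:ℝ) ≤ (K:ℝ) ^ m := by positivity
      have hKc : (0:ℝ) ≤ (K:ℝ) := by positivity
      nlinarith
    have hrc : (K : ℝ) ^ ((n : ℝ) * R) * c = r ^ n := by
      rw [hc, hr, ← Real.rpow_natCast ((K:ℝ) ^ (-γ : ℝ)) n, ← Real.rpow_mul (by positivity),
        ← Real.rpow_neg_one ((K : ℝ) ^ ((n : ℝ) * (R + γ))), ← Real.rpow_mul (by positivity),
        ← Real.rpow_add (by positivity : (0:ℝ) < (K:ℝ))]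
      ring_nf
    calc ((m * K ^ m : ℕ) : ℝ) * c ≤ (((n : ℝ) * R + ↑K) * (K : ℝ) ^ ((n : ℝ) * R)) * c :=
          mul_le_mul_of_nonneg_right step1 hc0.le
      _ = ((n : ℝ) * R + ↑K) * ((K : ℝ) ^ ((n : ℝ) * R) * c) := by ring
      _ = ((n : ℝ) * R + ↑K) * r ^ n := by rw [hrc]
  have hfinal : P.pr S ≤ errP P (φ n) (ψ n) + ovP P (φ n) ((n : ℝ) * R) + P.pr D := by
    calc P.pr S ≤ P.pr (E ∪ (V ∪ D)) := P.pr_mono hsub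
      _ ≤ P.pr E + P.pr (V ∪ D) := P.pr_union_le _ _
      _ ≤ P.pr E + (P.pr V + P.pr D) := by linarith [P.pr_union_le V D]
      _ = _ := by rw [errP, ovP]; ring
  have : P.pr S ≤ (a + θ/3) + (b + θ/3) + θ/3 := by
    have hD3 : P.pr D ≤ θ / 3 := le_trans (hDle.trans hgle) h3
    calc P.pr S ≤ _ := hfinal
      _ ≤ (a + θ/3) + (b + θ/3) + θ/3 := by
        exact add_le_add (add_le_add h1 h2) hD3
  calc P.pr S ≤ (a + θ/3) + (b + θ/3) + θ/3 := this
    _ ≤ ε + θ := by linarith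
lemma hbar_mem_nonneg {𝒳 : Type*} {K : ℕ} (hK : 2 ≤ K) (X : Source 𝒳)
    {ε R : ℝ} (hε1 : ε < 1)
    (hR : limsup (fun n => (X n).pr
      {x | Real.logb (K : ℝ) (1 / (X n).p x) / (n : ℝ) > R}) atTop ≤ ε) : 0 ≤ R := by
  by_contra h
  push_neg at h
  have hKR : (1 : ℝ) < (K : ℝ) := by exact_mod_cast hK.trans_lt' one_lt_two
  have huniv : ∀ n : ℕ, {x : Fin n → 𝒳 |
      Real.logb (K : ℝ) (1 / (X n).p x) / (n : ℝ) > R} = Set.univ := by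
    intro n
    ext x
    simp only [Set.mem_setOf_eq, Set.mem_univ, iff_true, gt_iff_lt]
    have hnn : (0 : ℝ) ≤ Real.logb (K : ℝ) (1 / (X n).p x) / (n : ℝ) := by
      apply div_nonneg _ (Nat.cast_nonneg n)
      rcases eq_or_lt_of_le ((X n).nonneg x) with h0 | h0
      · rw [← h0]; simp
      · apply Real.logb_nonneg hKR
        rw [le_div_iff₀ h0, one_mul]
        exact le_hasSum (X n).hasSum x (fun j _ => (X n).nonneg j)
    linarith
  have hone : (fun n => (X n).pr
      {x | Real.logb (K : ℝ) (1 / (X n).p x) / (n : ℝ) > R}) = fun _ => (1 : ℝ) := by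
    funext n
    rw [huniv n, (X n).pr_univ]
  rw [hone, limsup_const] at hR
  linarith

lemma main_eq {𝒳 : Type*} [Countable 𝒳] (K : ℕ) (hK : 2 ≤ K) (X : Source 𝒳)
    {ε a b : ℝ} (hε1 : ε < 1) (ha : 0 ≤ a) (hb : 0 ≤ b) (hab : a + b = ε) :
    Ropt K X a b = Hbar K X ε := by
  classical
  set HS : Set ℝ := {R | limsup (fun n => (X n).pr
    {x | Real.logb (K : ℝ) (1 / (X n).p x) / (n : ℝ) > R}) atTop ≤ ε} with hHS
  set AS : Set ℝ := {R | FirstAch K X a b R} with hAS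
  have hHb : BddBelow HS := ⟨0, fun R hR => hbar_mem_nonneg hK X hε1 hR⟩
  have hAb : BddBelow AS := ⟨0, fun R hR => hR.1⟩
  have hconv : ∀ R ∈ AS, ∀ γ : ℝ, 0 < γ → R + γ ∈ HS := by
    intro R hR γ hγ
    exact conv_lemma hK X hab.le hγ hR
  have hach : ∀ R ∈ HS, ∀ γ : ℝ, 0 < γ → R + γ ∈ AS := by
    intro R hR γ hγ
    exact ach_lemma hK X ha hb hab (hbar_mem_nonneg hK X hε1 hR) hR hγ
  have hgoal : sInf AS = sInf HS := by
    by_cases hne : HS.Nonempty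
    · obtain ⟨R₀, hR₀⟩ := hne
      have hAne : AS.Nonempty := ⟨R₀ + 1, hach R₀ hR₀ 1 one_pos⟩
      apply le_antisymm
      · refine le_csInf ⟨R₀, hR₀⟩ (fun R hR => ?_)
        refine le_of_forall_pos_le_add (fun γ hγ => ?_)
        exact csInf_le hAb (hach R hR γ hγ)
      · refine le_csInf hAne (fun R hR => ?_)
        refine le_of_forall_pos_le_add (fun γ hγ => ?_)
        exact csInf_le hHb (hconv R hR γ hγ)
    · have hAe : AS = ∅ := by
        rw [Set.eq_empty_iff_forall_notMem]
        intro R hR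
        exact hne ⟨R + 1, hconv R hR 1 one_pos⟩
      rw [Set.not_nonempty_iff_eq_empty] at hne
      rw [hAe, hne]
  exact hgoal

/-- for ε₁ + ε₂ = ε, R(ε₁,ε₂|X) = R(ε,0|X) = R(0,ε|X) = H̄_ε(X). -/
theorem statement10 {𝒳 : Type*} [Countable 𝒳] (K : ℕ) (hK : 2 ≤ K) (X : Source 𝒳)
    (ε ε₁ ε₂ : ℝ) (hε0 : 0 ≤ ε) (hε1 : ε < 1)
    (h₁ : 0 ≤ ε₁) (h₂ : 0 ≤ ε₂) (hsum : ε₁ + ε₂ = ε) :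
    Ropt K X ε₁ ε₂ = Hbar K X ε ∧ Ropt K X ε 0 = Hbar K X ε ∧
    Ropt K X 0 ε = Hbar K X ε := by
  refine ⟨main_eq K hK X hε1 h₁ h₂ hsum, main_eq K hK X hε1 hε0 le_rfl (add_zero ε),
    main_eq K hK X hε1 le_rfl hε0 (zero_add ε)⟩
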